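/- arXiv:2508.00666 — 2 statements merged into one kernel-verified Lean document; each statement's English description precedes it below -/
import Mathlib

section
/- Let Ω be a domain in ℂ that is convex in the positive direction and contained in a horizontal strip, and let h be a Koenigs map onto Ω. Suppose W(Ω) = ∫_{-∞}^0 ℓ_Ω(x) dx < ∞, that ℓ_Ω(x) > 0 for all x ≤ 0, that log ℓ_Ω(x)/(2x) → δ ∈ (0,+∞) as x → -∞, and that ∫_{-∞}^0 e^{-2δx} ℓ_Ω(x) dx < ∞. Then for every λ ∈ ℂ with λ ≠ 0 one has D(e^{λh}) < ∞ if and only if -δ ≤ Re λ < 0; that is, the point spectrum on the Dirichlet space equals {-δ ≤ Re λ < 0} ∪ {0}. (Theorem 1.2(c).) -/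
open MeasureTheory Set Complex Metric
open scoped ENNReal NNReal

noncomputable section
open Filter

/-- The Dirichlet integral `D(f) = ∫_𝔻 |f'(z)|² dA(z)` over the unit disk. -/
def dirichletIntegral (f : ℂ → ℂ) : ℝ≥0∞ :=
  ∫⁻ z in ball (0 : ℂ) 1, (‖deriv f z‖₊ : ℝ≥0∞) ^ 2

/-- `h` is a Koenigs map onto `Ω`: an injective holomorphic map on the unit disk with image `Ω`. -/
def IsKoenigsMap (h : ℂ → ℂ) (Ω : Set ℂ) : Prop :=
  DifferentiableOn ℂ h (ball 0 1) ∧ InjOn h (ball 0 1) ∧ h '' ball 0 1 = Ω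

/-- `Ω` is convex in the positive direction: `Ω + t ⊆ Ω` for all `t ≥ 0`. -/
def ConvexPosDir (Ω : Set ℂ) : Prop :=
  ∀ t : ℝ, 0 ≤ t → ∀ w ∈ Ω, w + (t : ℂ) ∈ Ω

/-- `ℓ_Ω(x)`: one-dimensional Lebesgue measure of the vertical slice `{y : x + iy ∈ Ω}`. -/
def sliceLen (Ω : Set ℂ) (x : ℝ) : ℝ≥0∞ :=
  volume {y : ℝ | (x : ℂ) + (y : ℂ) * Complex.I ∈ Ω}




lemma det_mul_c (c : ℂ) :
    ((ContinuousLinearMap.smulRight (1 : ℂ →L[ℂ] ℂ) c).restrictScalars ℝ).det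
      = Complex.normSq c := by
  have : (((ContinuousLinearMap.smulRight (1 : ℂ →L[ℂ] ℂ) c).restrictScalars ℝ) :
      ℂ →ₗ[ℝ] ℂ).det = Complex.normSq c := by
    rw [← LinearMap.det_toMatrix Complex.basisOneI, Matrix.det_fin_two]
    simp [LinearMap.toMatrix_apply, Complex.coe_basisOneI_repr, Complex.coe_basisOneI,
      Complex.normSq_apply, Complex.mul_re, Complex.mul_im]
  exact this

lemma dirichlet_eq (h : ℂ → ℂ) (hd : DifferentiableOn ℂ h (ball 0 1))
    (hinj : InjOn h (ball 0 1)) (lam : ℂ) :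
    dirichletIntegral (fun z => Complex.exp (lam * h z)) =
      ∫⁻ w in h '' ball 0 1,
        ENNReal.ofReal (‖lam‖ ^ 2 * Real.exp (2 * (lam * w).re)) := by
  set G : ℂ → ℝ≥0∞ := fun w => ENNReal.ofReal (‖lam‖ ^ 2 * Real.exp (2 * (lam * w).re)) with hG
  set f' : ℂ → ℂ →L[ℝ] ℂ := fun z =>
    (ContinuousLinearMap.smulRight (1 : ℂ →L[ℂ] ℂ) (deriv h z)).restrictScalars ℝ with hf'def
  have hf' : ∀ z ∈ ball (0:ℂ) 1, HasFDerivWithinAt h (f' z) (ball 0 1) z := by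
    intro z hz
    have hdz : HasDerivAt h (deriv h z) z :=
      (hd.differentiableAt (isOpen_ball.mem_nhds hz)).hasDerivAt
    exact (hdz.hasFDerivAt.restrictScalars ℝ).hasFDerivWithinAt
  rw [lintegral_image_eq_lintegral_abs_det_fderiv_mul volume measurableSet_ball hf' hinj G]
  unfold dirichletIntegral
  apply setLIntegral_congr_fun measurableSet_ball
  intro z hz
  dsimp only
  have hdz : HasDerivAt h (deriv h z) z :=
    (hd.differentiableAt (isOpen_ball.mem_nhds hz)).hasDerivAt
  have hfd : HasDerivAt (fun z => Complex.exp (lam * h z))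
      (Complex.exp (lam * h z) * (lam * deriv h z)) z := (hdz.const_mul lam).cexp
  rw [hfd.deriv]
  rw [hf'def]
  simp only []
  rw [det_mul_c]
  have h1 : ((‖Complex.exp (lam * h z) * (lam * deriv h z)‖₊ : ℝ≥0∞)) ^ 2
      = ENNReal.ofReal (‖Complex.exp (lam * h z) * (lam * deriv h z)‖ ^ 2) := by
    rw [ENNReal.ofReal_pow (norm_nonneg _), ofReal_norm, enorm_eq_nnnorm]
  rw [h1]
  rw [hG]
  simp only []
  rw [← ENNReal.ofReal_mul (by positivity), _root_.abs_of_nonneg (Complex.normSq_nonneg _)]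
  congr 1
  rw [norm_mul, norm_mul, mul_pow, mul_pow, Complex.norm_exp,
    ← Real.exp_nat_mul]
  rw [Complex.sq_norm (deriv h z)]
  ring_nf



lemma lintegral_omega (Ω : Set ℂ) (hΩ : MeasurableSet Ω) (c : ℝ) :
    ∫⁻ w in Ω, ENNReal.ofReal (Real.exp (c * w.re)) =
      ∫⁻ x : ℝ, ENNReal.ofReal (Real.exp (c * x)) * sliceLen Ω x := by
  have hmeas : Measurable fun w : ℂ => Ω.indicator (fun w => ENNReal.ofReal (Real.exp (c * w.re))) w := by
    apply Measurable.indicator _ hΩ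
    exact (Complex.measurable_re.const_mul c).exp.ennreal_ofReal
  rw [← lintegral_indicator hΩ]
  rw [← (Complex.volume_preserving_equiv_real_prod.symm).lintegral_comp hmeas]
  rw [Measure.volume_eq_prod, MeasureTheory.lintegral_prod]
  · apply lintegral_congr
    intro x
    have key : ∀ y : ℝ, Complex.measurableEquivRealProd.symm (x, y) = (x : ℂ) + (y : ℂ) * Complex.I := by
      intro y
      rw [Complex.measurableEquivRealProd_symm_apply]
      simp [Complex.ext_iff]
    have hsm : MeasurableSet {y : ℝ | (x : ℂ) + (y : ℂ) * Complex.I ∈ Ω} := by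
      have : Measurable fun y : ℝ => (x : ℂ) + (y : ℂ) * Complex.I := by
        measurability
      exact this hΩ
    calc ∫⁻ y, Ω.indicator (fun w => ENNReal.ofReal (Real.exp (c * w.re)))
            (Complex.measurableEquivRealProd.symm (x, y))
        = ∫⁻ y, ({y : ℝ | (x : ℂ) + (y : ℂ) * Complex.I ∈ Ω}).indicator
            (fun _ => ENNReal.ofReal (Real.exp (c * x))) y := by
          apply lintegral_congr
          intro y
          rw [key y]
          by_cases hy : (x : ℂ) + (y : ℂ) * Complex.I ∈ Ω
          · rw [indicator_of_mem hy, indicator_of_mem (show y ∈ {y : ℝ | (x : ℂ) + (y : ℂ) * Complex.I ∈ Ω} from hy)]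
            simp
          · rw [indicator_of_notMem hy, indicator_of_notMem (show y ∉ {y : ℝ | (x : ℂ) + (y : ℂ) * Complex.I ∈ Ω} from hy)]
      _ = ENNReal.ofReal (Real.exp (c * x)) * sliceLen Ω x := by
          rw [lintegral_indicator hsm, setLIntegral_const, sliceLen]
  · exact (hmeas.comp Complex.measurableEquivRealProd.symm.measurable).aemeasurable


lemma lintegral_exp_Iio_top {c M : ℝ} (hc : c < 0) :
    ∫⁻ x in Iio M, ENNReal.ofReal (Real.exp (c * x)) = ⊤ := by
  apply ENNReal.eq_top_of_forall_nnreal_le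
  intro r
  -- choose n with exp (c*M) * (-c) * n ≥ r
  obtain ⟨n, hn⟩ := exists_nat_ge ((r : ℝ) / (Real.exp (c * M) * (-c)))
  have hpos : 0 < Real.exp (c * M) * (-c) := mul_pos (Real.exp_pos _) (neg_pos.2 hc)
  have hrn : (r : ℝ) ≤ Real.exp (c * M) * (-c) * n := by
    rw [div_le_iff₀ hpos] at hn; linarith [hn]
  have key : Real.exp (c * M) * (-c) * n ≤ Real.exp (c * (M - n)) := by
    rw [show c * (M - n) = c * M + (-c) * n by ring, Real.exp_add]
    have h1 : (-c) * n + 1 ≤ Real.exp ((-c) * n) := Real.add_one_le_exp _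
    have h2 : (-c) * n ≤ Real.exp ((-c) * n) := by nlinarith [mul_nonneg (neg_nonneg.2 hc.le) (Nat.cast_nonneg n)]
    nlinarith [Real.exp_pos (c * M)]
  have hsub : Ico (M - (n+1 : ℕ)) (M - n) ⊆ Iio M := by
    intro x hx
    simp only [mem_Ico, mem_Iio] at *
    push_cast at hx
    linarith [hx.2]
  calc (r : ℝ≥0∞) ≤ ENNReal.ofReal (Real.exp (c * (M - n))) * volume (Ico (M - (n+1 : ℕ)) (M - n)) := by
        rw [Real.volume_Ico]
        have : M - (n:ℝ) - (M - ((n:ℕ)+1:ℕ)) = 1 := by push_cast; ring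
        rw [this, ENNReal.ofReal_one, mul_one]
        rw [← ENNReal.ofReal_coe_nnreal]
        exact ENNReal.ofReal_le_ofReal (le_trans hrn key)
    _ ≤ ∫⁻ x in Ico (M - (n+1 : ℕ)) (M - n), ENNReal.ofReal (Real.exp (c * x)) := by
        rw [← setLIntegral_const]
        apply lintegral_mono_ae
        filter_upwards [ae_restrict_mem measurableSet_Ico] with x hx
        apply ENNReal.ofReal_le_ofReal
        apply Real.exp_le_exp.2
        have := hx.2
        nlinarith [hx.2]
    _ ≤ ∫⁻ x in Iio M, ENNReal.ofReal (Real.exp (c * x)) :=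
        lintegral_mono_set hsub

lemma chunkC (ℓ : ℝ → ℝ≥0∞) (B : ℝ≥0∞) (hB : B < ⊤) (hbdd : ∀ x, ℓ x ≤ B)
    (hmono : Monotone ℓ)
    (δ : ℝ) (hδ : 0 < δ)
    (hlim : Tendsto (fun x => Real.log (ℓ x).toReal / (2 * x)) atBot (nhds δ))
    (hposl : ∀ x : ℝ, x ≤ 0 → 0 < ℓ x)
    (hint : ∫⁻ x in Iio (0:ℝ), ENNReal.ofReal (Real.exp (-2 * δ * x)) * ℓ x < ⊤)
    (a : ℝ) :
    (∫⁻ x : ℝ, ENNReal.ofReal (Real.exp (2 * a * x)) * ℓ x) < ⊤ ↔ (-δ ≤ a ∧ a < 0) := by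
  have hsplit : (∫⁻ x : ℝ, ENNReal.ofReal (Real.exp (2 * a * x)) * ℓ x)
      = (∫⁻ x in Iio (0:ℝ), ENNReal.ofReal (Real.exp (2 * a * x)) * ℓ x)
        + ∫⁻ x in Ici (0:ℝ), ENNReal.ofReal (Real.exp (2 * a * x)) * ℓ x := by
    rw [← lintegral_add_compl _ measurableSet_Iio, compl_Iio]
  constructor
  · -- divergence directions, contrapositive
    intro hfin
    by_contra hcon
    rw [not_and_or, not_le, not_lt] at hcon
    rcases hcon with hlt | hge
    · -- a < -δ : diverges near -∞
      set ε : ℝ := (-a - δ) / 2 with hε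
      have hεpos : 0 < ε := by simp only [hε]; linarith
      have hev : ∀ᶠ x in atBot, Real.log (ℓ x).toReal / (2 * x) < δ + ε :=
        Filter.Tendsto.eventually_lt_const (by linarith) hlim
      obtain ⟨M0, hM0⟩ := Filter.eventually_atBot.1 hev
      set M : ℝ := min M0 (-1) with hM
      have hMneg : M < 0 := lt_of_le_of_lt (min_le_right _ _) (by norm_num)
      have hkey : ∀ x ∈ Iio M, ENNReal.ofReal (Real.exp ((a + δ) * x))
          ≤ ENNReal.ofReal (Real.exp (2 * a * x)) * ℓ x := by
        intro x hx
        have hxM : x < M := hx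
        have hx0 : x < 0 := hxM.trans hMneg
        have hfx : ℓ x < ⊤ := lt_of_le_of_lt (hbdd x) hB
        have hpx : 0 < (ℓ x).toReal := ENNReal.toReal_pos (hposl x hx0.le).ne' hfx.ne
        have hlog : Real.log (ℓ x).toReal / (2 * x) < δ + ε :=
          hM0 x (hxM.le.trans (min_le_left _ _))
        have h2x : 2 * x < 0 := by linarith
        have hgt : (δ + ε) * (2 * x) < Real.log (ℓ x).toReal :=
          (div_lt_iff_of_neg h2x).1 hlog
        have hexp : Real.exp ((δ + ε) * (2 * x)) ≤ (ℓ x).toReal := by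
          calc Real.exp ((δ + ε) * (2 * x)) ≤ Real.exp (Real.log (ℓ x).toReal) :=
                Real.exp_le_exp.2 hgt.le
            _ = (ℓ x).toReal := Real.exp_log hpx
        have hℓ : ENNReal.ofReal (Real.exp ((δ + ε) * (2 * x))) ≤ ℓ x := by
          rw [← ENNReal.ofReal_toReal hfx.ne]
          exact ENNReal.ofReal_le_ofReal hexp
        have heq : Real.exp ((a + δ) * x)
            = Real.exp (2 * a * x) * Real.exp ((δ + ε) * (2 * x)) := by
          rw [← Real.exp_add]
          congr 1
          simp only [hε]
          ring
        calc ENNReal.ofReal (Real.exp ((a + δ) * x))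
            = ENNReal.ofReal (Real.exp (2 * a * x)) * ENNReal.ofReal (Real.exp ((δ + ε) * (2 * x))) := by
              rw [← ENNReal.ofReal_mul (Real.exp_pos _).le, heq]
          _ ≤ ENNReal.ofReal (Real.exp (2 * a * x)) * ℓ x := mul_le_mul_right hℓ _
      have htop : (⊤:ℝ≥0∞) ≤ ∫⁻ x in Iio (0:ℝ), ENNReal.ofReal (Real.exp (2 * a * x)) * ℓ x := by
        calc (⊤:ℝ≥0∞) = ∫⁻ x in Iio M, ENNReal.ofReal (Real.exp ((a + δ) * x)) :=
              (lintegral_exp_Iio_top (by linarith)).symm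
          _ ≤ ∫⁻ x in Iio M, ENNReal.ofReal (Real.exp (2 * a * x)) * ℓ x := by
              apply lintegral_mono_ae
              filter_upwards [ae_restrict_mem measurableSet_Iio] with x hx
              exact hkey x hx
          _ ≤ _ := lintegral_mono_set (fun x hx => lt_trans hx hMneg)
      rw [hsplit] at hfin
      exact absurd (lt_of_le_of_lt (htop.trans le_self_add) hfin) (lt_irrefl _)
    · -- 0 ≤ a : diverges on [0,∞)
      have hlow : ∀ x ∈ Ici (0:ℝ), ℓ 0 ≤ ENNReal.ofReal (Real.exp (2 * a * x)) * ℓ x := by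
        intro x hx
        have h1 : (1:ℝ≥0∞) ≤ ENNReal.ofReal (Real.exp (2 * a * x)) := by
          rw [← ENNReal.ofReal_one]
          exact ENNReal.ofReal_le_ofReal (Real.one_le_exp (by nlinarith [mem_Ici.1 hx]))
        calc ℓ 0 = 1 * ℓ 0 := (one_mul _).symm
          _ ≤ ENNReal.ofReal (Real.exp (2 * a * x)) * ℓ x :=
            mul_le_mul' h1 (hmono (mem_Ici.1 hx))
      have : (⊤:ℝ≥0∞) ≤ ∫⁻ x in Ici (0:ℝ), ENNReal.ofReal (Real.exp (2 * a * x)) * ℓ x := by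
        calc (⊤:ℝ≥0∞) = ℓ 0 * volume (Ici (0:ℝ)) := by
              rw [Real.volume_Ici, ENNReal.mul_top]
              exact (hposl 0 le_rfl).ne'
          _ = ∫⁻ _x in Ici (0:ℝ), ℓ 0 := (setLIntegral_const _ _).symm
          _ ≤ _ := by
              apply lintegral_mono_ae
              filter_upwards [ae_restrict_mem measurableSet_Ici] with x hx
              exact hlow x hx
      rw [hsplit] at hfin
      exact absurd (lt_of_le_of_lt (this.trans le_add_self) hfin) (lt_irrefl _)
  · rintro ⟨h1, h2⟩
    rw [hsplit]
    apply ENNReal.add_lt_top.2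
    constructor
    · -- Iio part ≤ hint
      apply lt_of_le_of_lt _ hint
      apply lintegral_mono_ae
      filter_upwards [ae_restrict_mem measurableSet_Iio] with x hx
      apply mul_le_mul_left
      apply ENNReal.ofReal_le_ofReal
      apply Real.exp_le_exp.2
      have : x < 0 := hx
      nlinarith
    · -- Ici part: ≤ B * ∫ exp(2 a x)
      have hInt : IntegrableOn (fun x => Real.exp (2 * a * x)) (Ioi (-1:ℝ)) := by
        have := exp_neg_integrableOn_Ioi (-1:ℝ) (b := -(2*a)) (by linarith)
        simpa using this
      have hfin2 : ∫⁻ x in Ioi (-1:ℝ), ENNReal.ofReal (Real.exp (2 * a * x)) < ⊤ := by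
        have := hInt.2
        rw [hasFiniteIntegral_iff_ofReal] at this
        · exact this
        · filter_upwards with x using (Real.exp_pos _).le
      calc ∫⁻ x in Ici (0:ℝ), ENNReal.ofReal (Real.exp (2 * a * x)) * ℓ x
          ≤ ∫⁻ x in Ici (0:ℝ), ENNReal.ofReal (Real.exp (2 * a * x)) * B := by
            apply lintegral_mono_ae
            filter_upwards with x
            exact mul_le_mul_right (hbdd x) _
        _ ≤ ∫⁻ x in Ioi (-1:ℝ), ENNReal.ofReal (Real.exp (2 * a * x)) * B :=
            lintegral_mono_set (fun x hx => lt_of_lt_of_le (by norm_num) (mem_Ici.1 hx))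
        _ = (∫⁻ x in Ioi (-1:ℝ), ENNReal.ofReal (Real.exp (2 * a * x))) * B := by
            rw [lintegral_mul_const' _ _ hB.ne]
        _ < ⊤ := ENNReal.mul_lt_top hfin2 hB


/-- **Theorem 1.2(c).** If `W(Ω) < ∞`, `ℓ_Ω(x) > 0` for `x ≤ 0`,
`log ℓ_Ω(x)/(2x) → δ ∈ (0,∞)` as `x → -∞`, and `∫_{-∞}^0 e^{-2δx} ℓ_Ω(x) dx < ∞`, then the
point spectrum on the Dirichlet space is `{-δ ≤ Re λ < 0} ∪ {0}`. -/
theorem dirichlet_spectrum_hyperbolic_delta_finite_closed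
    (Ω : Set ℂ) (hopen : IsOpen Ω) (hconn : IsConnected Ω)
    (hconv : ConvexPosDir Ω)
    (hstrip : ∃ a b : ℝ, Ω ⊆ {w : ℂ | a < w.im ∧ w.im < b})
    (h : ℂ → ℂ) (hKoenigs : IsKoenigsMap h Ω)
    (hW : ∫⁻ x in Iio (0 : ℝ), sliceLen Ω x < ⊤)
    (hpos : ∀ x : ℝ, x ≤ 0 → 0 < sliceLen Ω x)
    (δ : ℝ) (hδpos : 0 < δ)
    (hlim : Filter.Tendsto (fun x : ℝ => Real.log (sliceLen Ω x).toReal / (2 * x))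
      Filter.atBot (nhds δ))
    (hint : ∫⁻ x in Iio (0 : ℝ),
      ENNReal.ofReal (Real.exp (-2 * δ * x)) * sliceLen Ω x < ⊤)
    (lam : ℂ) (hlam : lam ≠ 0) :
    dirichletIntegral (fun z => Complex.exp (lam * h z)) < ⊤ ↔
      (-δ ≤ lam.re ∧ lam.re < 0) := by
  obtain ⟨hd, hinj, himg⟩ := hKoenigs
  obtain ⟨sa, sb, hsub⟩ := hstrip
  have hΩmeas : MeasurableSet Ω := hopen.measurableSet
  -- Step 1: change of variables
  have hD : dirichletIntegral (fun z => Complex.exp (lam * h z)) =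
      ∫⁻ w in Ω, ENNReal.ofReal (‖lam‖ ^ 2 * Real.exp (2 * (lam * w).re)) := by
    rw [dirichlet_eq h hd hinj lam, himg]
  -- comparison constants
  set Mab : ℝ := max |sa| |sb| with hMab
  set C : ℝ := |lam.im| * Mab with hC
  have hMab0 : 0 ≤ Mab := le_trans (abs_nonneg sa) (le_max_left _ _)
  have himb : ∀ w ∈ Ω, |lam.im * w.im| ≤ C := by
    intro w hw
    obtain ⟨h1, h2⟩ := hsub hw
    have habs : |w.im| ≤ Mab := by
      rw [abs_le]
      constructor
      · have : -|sa| ≤ sa := neg_abs_le sa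
        have : -Mab ≤ -|sa| := neg_le_neg (le_max_left _ _)
        linarith [neg_abs_le sa]
      · have : sb ≤ |sb| := le_abs_self sb
        have : |sb| ≤ Mab := le_max_right _ _
        linarith [le_abs_self sb]
    rw [abs_mul]
    exact mul_le_mul_of_nonneg_left habs (abs_nonneg _)
  set g : ℂ → ℝ≥0∞ := fun w => ENNReal.ofReal (Real.exp (2 * lam.re * w.re)) with hg
  set k₁ : ℝ≥0∞ := ENNReal.ofReal (‖lam‖ ^ 2 * Real.exp (-(2 * C))) with hk₁
  set k₂ : ℝ≥0∞ := ENNReal.ofReal (‖lam‖ ^ 2 * Real.exp (2 * C)) with hk₂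
  have hlamnorm : 0 < ‖lam‖ := norm_pos_iff.2 hlam
  have hk₁0 : k₁ ≠ 0 := by
    rw [hk₁]
    exact (ENNReal.ofReal_pos.2 (by positivity)).ne'
  have hk₂top : k₂ ≠ ⊤ := ENNReal.ofReal_ne_top
  have hcomp : ∀ w ∈ Ω,
      k₁ * g w ≤ ENNReal.ofReal (‖lam‖ ^ 2 * Real.exp (2 * (lam * w).re)) ∧
      ENNReal.ofReal (‖lam‖ ^ 2 * Real.exp (2 * (lam * w).re)) ≤ k₂ * g w := by
    intro w hw
    have him := himb w hw
    have hre : (lam * w).re = lam.re * w.re - lam.im * w.im := Complex.mul_re lam w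
    constructor
    · rw [hk₁, hg, ← ENNReal.ofReal_mul (by positivity)]
      apply ENNReal.ofReal_le_ofReal
      rw [mul_assoc, ← Real.exp_add]
      apply mul_le_mul_of_nonneg_left _ (by positivity)
      apply Real.exp_le_exp.2
      rw [hre]
      have := abs_le.1 him
      linarith [this.1, this.2]
    · rw [hk₂, hg, ← ENNReal.ofReal_mul (by positivity)]
      apply ENNReal.ofReal_le_ofReal
      rw [mul_assoc, ← Real.exp_add]
      apply mul_le_mul_of_nonneg_left _ (by positivity)
      apply Real.exp_le_exp.2
      rw [hre]
      have := abs_le.1 him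
      linarith [this.1, this.2]
  have hl : k₁ * ∫⁻ w in Ω, g w ≤ ∫⁻ w in Ω, ENNReal.ofReal (‖lam‖ ^ 2 * Real.exp (2 * (lam * w).re)) := by
    rw [← lintegral_const_mul' _ _ ENNReal.ofReal_ne_top]
    apply lintegral_mono_ae
    filter_upwards [ae_restrict_mem hΩmeas] with w hw
    exact (hcomp w hw).1
  have hr : (∫⁻ w in Ω, ENNReal.ofReal (‖lam‖ ^ 2 * Real.exp (2 * (lam * w).re))) ≤ k₂ * ∫⁻ w in Ω, g w := by
    rw [← lintegral_const_mul' _ _ hk₂top]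
    apply lintegral_mono_ae
    filter_upwards [ae_restrict_mem hΩmeas] with w hw
    exact (hcomp w hw).2
  -- Step 2: Fubini
  have hfub : (∫⁻ w in Ω, g w)
      = ∫⁻ x : ℝ, ENNReal.ofReal (Real.exp (2 * lam.re * x)) * sliceLen Ω x := by
    have := lintegral_omega Ω hΩmeas (2 * lam.re)
    simpa [hg, mul_assoc] using this
  -- Step 3: properties of sliceLen
  set B : ℝ≥0∞ := ENNReal.ofReal (sb - sa) with hB
  have hBtop : B < ⊤ := ENNReal.ofReal_lt_top
  have hbdd : ∀ x, sliceLen Ω x ≤ B := by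
    intro x
    rw [sliceLen, hB, ← Real.volume_Ioo]
    apply measure_mono
    intro y hy
    have := hsub hy
    simpa using this
  have hmono : Monotone (sliceLen Ω) := by
    intro x x' hxx
    apply measure_mono
    intro y hy
    have h1 : (x : ℂ) + (y : ℂ) * Complex.I ∈ Ω := hy
    have h2 := hconv (x' - x) (by linarith) _ h1
    have h3 : (x : ℂ) + (y : ℂ) * Complex.I + ((x' - x : ℝ) : ℂ)
        = (x' : ℂ) + (y : ℂ) * Complex.I := by push_cast; ring
    rw [h3] at h2
    exact h2
  -- Step 4: real-variable characterization
  have hchar := chunkC (sliceLen Ω) B hBtop hbdd hmono δ hδpos hlim hpos hint lam.re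
  rw [hD]
  constructor
  · intro hfin
    apply hchar.1
    rw [← hfub]
    by_contra htop
    rw [not_lt, top_le_iff] at htop
    rw [htop, ENNReal.mul_top hk₁0] at hl
    exact absurd (lt_of_le_of_lt hl hfin) (lt_irrefl _)
  · intro hcond
    have := hchar.2 hcond
    rw [← hfub] at this
    exact lt_of_le_of_lt hr (ENNReal.mul_lt_top (lt_top_iff_ne_top.2 hk₂top) this)
end
end

section
/- Let Ω be a domain in ℂ that is convex in the positive direction and contained in a horizontal strip, and let h be a Koenigs map onto Ω. Suppose W(Ω) = ∫_{-∞}^0 ℓ_Ω(x) dx < ∞, that ℓ_Ω(x) > 0 for all x ≤ 0, that log ℓ_Ω(x)/(2x) → δ ∈ (0,+∞) as x → -∞, and that ∫_{-∞}^0 e^{-2δx} ℓ_Ω(x) dx = +∞. Then for every λ ∈ ℂ with λ ≠ 0 one has D(e^{λh}) < ∞ if and only if -δ < Re λ < 0; that is, the point spectrum on the Dirichlet space equals {-δ < Re λ < 0} ∪ {0}. (Theorem 1.2(d).) -/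
open MeasureTheory Set Complex Metric
open scoped ENNReal NNReal

noncomputable section

/-! ### Auxiliary lemmas -/

lemma aux_det_complex_mul (c : ℂ) :
    (((1 : ℂ →L[ℂ] ℂ).smulRight c).restrictScalars ℝ).det = Complex.normSq c := by
  have h1 : ((((1 : ℂ →L[ℂ] ℂ).smulRight c).restrictScalars ℝ : ℂ →L[ℝ] ℂ) : ℂ →ₗ[ℝ] ℂ)
      = Algebra.lmul ℝ ℂ c := by
    apply LinearMap.ext; intro z; simp [mul_comm]
  rw [ContinuousLinearMap.det, h1, ← Algebra.norm_apply, Algebra.norm_complex_apply]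

lemma aux_cov (h : ℂ → ℂ) (hd : DifferentiableOn ℂ h (ball 0 1))
    (hinj : InjOn h (ball 0 1)) (g : ℂ → ℝ≥0∞) :
    ∫⁻ w in h '' ball (0:ℂ) 1, g w
      = ∫⁻ z in ball (0:ℂ) 1, (‖deriv h z‖₊ : ℝ≥0∞) ^ 2 * g (h z) := by
  have hf' : ∀ z ∈ ball (0:ℂ) 1, HasFDerivWithinAt h
      (((1 : ℂ →L[ℂ] ℂ).smulRight (deriv h z)).restrictScalars ℝ) (ball 0 1) z := by
    intro z hz
    have hz' : DifferentiableAt ℂ h z := hd.differentiableAt (isOpen_ball.mem_nhds hz)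
    exact (hz'.hasDerivAt.hasFDerivAt.restrictScalars ℝ).hasFDerivWithinAt
  rw [lintegral_image_eq_lintegral_abs_det_fderiv_mul volume measurableSet_ball hf' hinj g]
  apply setLIntegral_congr_fun measurableSet_ball
  intro z _
  beta_reduce
  rw [aux_det_complex_mul, _root_.abs_of_nonneg (Complex.normSq_nonneg _), ← Complex.sq_norm,
    ENNReal.ofReal_pow (by positivity)]
  congr 2
  exact ofReal_norm _

lemma aux_deriv_cexp_mul (lam : ℂ) (h : ℂ → ℂ) (z : ℂ) (hz : DifferentiableAt ℂ h z) :
    deriv (fun z => Complex.exp (lam * h z)) z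
      = Complex.exp (lam * h z) * (lam * deriv h z) :=
  (((hz.hasDerivAt.const_mul lam)).cexp).deriv

lemma aux_nnnorm_sq_eq (lam w d : ℂ) :
    ((‖Complex.exp (lam * w) * (lam * d)‖₊ : ℝ≥0∞)) ^ 2
      = (‖d‖₊ : ℝ≥0∞) ^ 2 *
        ENNReal.ofReal (Complex.normSq lam * Real.exp (2 * (lam * w).re)) := by
  have h1 : ∀ c : ℂ, ((‖c‖₊ : ℝ≥0∞)) = ENNReal.ofReal ‖c‖ := fun c =>
    (ofReal_norm c).symm
  rw [h1, h1, ← ENNReal.ofReal_pow (norm_nonneg _), ← ENNReal.ofReal_pow (norm_nonneg _),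
    ← ENNReal.ofReal_mul (by positivity)]
  congr 1
  rw [norm_mul, norm_mul, Complex.norm_exp]
  rw [← Complex.sq_norm lam]
  have : Real.exp (lam * w).re ^ 2 = Real.exp (2 * (lam * w).re) := by
    rw [← Real.exp_nat_mul]; norm_num
  rw [← this]; ring

lemma aux_lint_exp_Ioi {c : ℝ} (hc : c < 0) (X : ℝ) :
    ∫⁻ x in Ioi X, ENNReal.ofReal (Real.exp (c * x)) < ⊤ := by
  have h := (exp_neg_integrableOn_Ioi X (show 0 < -c by linarith)).2
  rw [hasFiniteIntegral_iff_ofReal] at h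
  · convert h using 4 with x; ring_nf
  · filter_upwards with x using (Real.exp_pos _).le

lemma aux_lint_exp_Iio {c : ℝ} (hc : 0 < c) (X : ℝ) :
    ∫⁻ x in Iio X, ENNReal.ofReal (Real.exp (c * x)) < ⊤ := by
  have hemb : MeasurableEmbedding (fun x : ℝ => -x) :=
    (Homeomorph.neg ℝ).measurableEmbedding
  have him : (fun x : ℝ => -x) '' Ioi (-X) = Iio X := by
    ext y
    constructor
    · rintro ⟨x, hx, rfl⟩; simp only [mem_Ioi] at hx; simp only [mem_Iio]; linarith
    · intro hy; simp only [mem_Iio] at hy; exact ⟨-y, by simp only [mem_Ioi]; linarith, by ring⟩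
  have hmp := (Measure.measurePreserving_neg (volume : Measure ℝ)).setLIntegral_comp_emb hemb
      (fun x => ENNReal.ofReal (Real.exp (c * x))) (Ioi (-X))
  rw [him] at hmp
  rw [← hmp]
  have h2 : ∀ x : ℝ, ENNReal.ofReal (Real.exp (c * -x)) = ENNReal.ofReal (Real.exp (-c * x)) := by
    intro x; ring_nf
  simp only [h2]
  exact aux_lint_exp_Ioi (by linarith) _

lemma aux_lint_exp_Ici {c : ℝ} (hc : c < 0) (X : ℝ) :
    ∫⁻ x in Ici X, ENNReal.ofReal (Real.exp (c * x)) < ⊤ := by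
  rw [← setLIntegral_congr (Ioi_ae_eq_Ici (μ := volume) (a := X))]
  exact aux_lint_exp_Ioi hc X

lemma aux_measurable_sliceLen (Ω : Set ℂ) (hΩ : MeasurableSet Ω) :
    Measurable (sliceLen Ω) := by
  have hs : MeasurableSet {p : ℝ × ℝ | (p.1 : ℂ) + (p.2 : ℂ) * Complex.I ∈ Ω} := by
    have hcont : Continuous fun p : ℝ × ℝ => (p.1 : ℂ) + (p.2 : ℂ) * Complex.I := by
      continuity
    exact hcont.measurable hΩ
  exact measurable_measure_prodMk_left (ν := volume) hs

lemma aux_fubini_slice (Ω : Set ℂ) (hΩ : MeasurableSet Ω) (α β : ℝ) :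
    ∫⁻ w in Ω, ENNReal.ofReal (Real.exp (2 * (α * w.re - β * w.im)))
      = ∫⁻ x : ℝ, ENNReal.ofReal (Real.exp (2 * α * x))
          * ∫⁻ y in {y : ℝ | (x : ℂ) + (y : ℂ) * Complex.I ∈ Ω},
              ENNReal.ofReal (Real.exp (-2 * β * y)) := by
  set f : ℂ → ℝ≥0∞ := fun w => ENNReal.ofReal (Real.exp (2 * (α * w.re - β * w.im))) with hf
  have hfmeas : Measurable f := by
    apply ENNReal.measurable_ofReal.comp
    exact (Real.continuous_exp.comp (by continuity)).measurable
  set G : ℂ → ℝ≥0∞ := Ω.indicator f with hG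
  have hGmeas : Measurable G := hfmeas.indicator hΩ
  have h1 : ∫⁻ w in Ω, f w = ∫⁻ w, G w := (lintegral_indicator hΩ f).symm
  have h2 : ∫⁻ w, G w
      = ∫⁻ p : ℝ × ℝ, G (Complex.measurableEquivRealProd.symm p) := by
    exact ((Complex.volume_preserving_equiv_real_prod.symm
      Complex.measurableEquivRealProd).lintegral_comp hGmeas).symm
  have h3 : ∫⁻ p : ℝ × ℝ, G (Complex.measurableEquivRealProd.symm p)
      = ∫⁻ x : ℝ, ∫⁻ y : ℝ, G (Complex.measurableEquivRealProd.symm (x, y)) := by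
    rw [Measure.volume_eq_prod, lintegral_prod]
    exact (hGmeas.comp Complex.measurableEquivRealProd.symm.measurable).aemeasurable
  rw [h1, h2, h3]
  congr 1
  ext x
  have key : ∀ y : ℝ, Complex.measurableEquivRealProd.symm (x, y)
      = (x : ℂ) + (y : ℂ) * Complex.I := by
    intro y
    rw [Complex.measurableEquivRealProd_symm_apply]
    exact Complex.mk_eq_add_mul_I x y
  have h4 : ∀ y : ℝ, G (Complex.measurableEquivRealProd.symm (x, y))
      = ({y : ℝ | (x : ℂ) + (y : ℂ) * Complex.I ∈ Ω}).indicator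
          (fun y => ENNReal.ofReal (Real.exp (2 * α * x)) *
            ENNReal.ofReal (Real.exp (-2 * β * y))) y := by
    intro y
    rw [key y]
    by_cases hy : (x : ℂ) + (y : ℂ) * Complex.I ∈ Ω
    · rw [hG, indicator_of_mem hy, indicator_of_mem (by exact hy)]
      rw [hf]
      simp only []
      rw [← ENNReal.ofReal_mul (Real.exp_pos _).le, ← Real.exp_add]
      congr 2
      simp [Complex.add_re, Complex.add_im]
      ring
    · rw [hG, indicator_of_notMem hy, indicator_of_notMem (by exact hy)]
  simp only [h4]
  have hset : MeasurableSet {y : ℝ | (x : ℂ) + (y : ℂ) * Complex.I ∈ Ω} := by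
    have : Continuous fun y : ℝ => (x : ℂ) + (y : ℂ) * Complex.I := by continuity
    exact this.measurable hΩ
  rw [lintegral_indicator hset]
  rw [lintegral_const_mul' _ _ ENNReal.ofReal_ne_top]

lemma aux_mul_lt_top_iff {c x : ℝ≥0∞} (hc0 : c ≠ 0) (hct : c ≠ ⊤) :
    c * x < ⊤ ↔ x < ⊤ := by
  constructor
  · intro hx
    rcases ENNReal.mul_lt_top_iff.mp hx with ⟨-, hx⟩ | hc | hx
    · exact hx
    · exact absurd hc hc0
    · simp [hx]
  · intro hx
    exact ENNReal.mul_lt_top hct.lt_top hx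

/-- **Theorem 1.2(d).** If `W(Ω) < ∞`, `ℓ_Ω(x) > 0` for `x ≤ 0`,
`log ℓ_Ω(x)/(2x) → δ ∈ (0,∞)` as `x → -∞`, and `∫_{-∞}^0 e^{-2δx} ℓ_Ω(x) dx = +∞`, then the
point spectrum on the Dirichlet space is `{-δ < Re λ < 0} ∪ {0}`. -/
theorem dirichlet_spectrum_hyperbolic_delta_finite_open
    (Ω : Set ℂ) (hopen : IsOpen Ω) (hconn : IsConnected Ω)
    (hconv : ConvexPosDir Ω)
    (hstrip : ∃ a b : ℝ, Ω ⊆ {w : ℂ | a < w.im ∧ w.im < b})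
    (h : ℂ → ℂ) (hKoenigs : IsKoenigsMap h Ω)
    (hW : ∫⁻ x in Iio (0 : ℝ), sliceLen Ω x < ⊤)
    (hpos : ∀ x : ℝ, x ≤ 0 → 0 < sliceLen Ω x)
    (δ : ℝ) (hδpos : 0 < δ)
    (hlim : Filter.Tendsto (fun x : ℝ => Real.log (sliceLen Ω x).toReal / (2 * x))
      Filter.atBot (nhds δ))
    (hint : ∫⁻ x in Iio (0 : ℝ),
      ENNReal.ofReal (Real.exp (-2 * δ * x)) * sliceLen Ω x = ⊤)
    (lam : ℂ) (hlam : lam ≠ 0) :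
    dirichletIntegral (fun z => Complex.exp (lam * h z)) < ⊤ ↔
      (-δ < lam.re ∧ lam.re < 0) := by
  obtain ⟨hd, hinj, him⟩ := hKoenigs
  obtain ⟨a, b, hab⟩ := hstrip
  have hΩm : MeasurableSet Ω := hopen.measurableSet
  -- slice facts
  have hslice_sub : ∀ x : ℝ, {y : ℝ | (x : ℂ) + (y : ℂ) * Complex.I ∈ Ω} ⊆ Ioo a b := by
    intro x y hy
    have h2 := hab hy
    simp only [mem_setOf_eq, Complex.add_im, Complex.ofReal_im, Complex.mul_im,
      Complex.ofReal_re, Complex.I_im, Complex.I_re, mul_zero, mul_one, zero_add,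
      add_zero] at h2
    exact mem_Ioo.mpr h2
  have hslice_meas : ∀ x : ℝ, MeasurableSet {y : ℝ | (x : ℂ) + (y : ℂ) * Complex.I ∈ Ω} := by
    intro x
    have : Continuous fun y : ℝ => (x : ℂ) + (y : ℂ) * Complex.I := by continuity
    exact this.measurable hΩm
  have hl_le : ∀ x : ℝ, sliceLen Ω x ≤ ENNReal.ofReal (b - a) := by
    intro x
    rw [show ENNReal.ofReal (b - a) = volume (Ioo a b) from Real.volume_Ioo.symm]
    exact measure_mono (hslice_sub x)
  have hl_ne_top : ∀ x : ℝ, sliceLen Ω x ≠ ⊤ := fun x =>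
    ((hl_le x).trans_lt ENNReal.ofReal_lt_top).ne
  -- Step A : Dirichlet integral as an integral over Ω
  set g : ℂ → ℝ≥0∞ :=
    fun w => ENNReal.ofReal (Complex.normSq lam * Real.exp (2 * (lam * w).re)) with hg
  have hA : dirichletIntegral (fun z => Complex.exp (lam * h z)) = ∫⁻ w in Ω, g w := by
    rw [← him, aux_cov h hd hinj g, dirichletIntegral]
    apply setLIntegral_congr_fun measurableSet_ball
    intro z hz
    beta_reduce
    rw [aux_deriv_cexp_mul lam h z (hd.differentiableAt (isOpen_ball.mem_nhds hz)),
      aux_nnnorm_sq_eq]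
  -- pull out the constant normSq lam
  set I : ℝ≥0∞ :=
    ∫⁻ w in Ω, ENNReal.ofReal (Real.exp (2 * (lam.re * w.re - lam.im * w.im))) with hI
  have hgI : ∫⁻ w in Ω, g w = ENNReal.ofReal (Complex.normSq lam) * I := by
    rw [hI, ← lintegral_const_mul' _ _ (ENNReal.ofReal_ne_top)]
    apply setLIntegral_congr_fun hΩm
    intro w _
    rw [hg]
    simp only []
    rw [ENNReal.ofReal_mul (Complex.normSq_nonneg lam), Complex.mul_re]
  have hc0 : ENNReal.ofReal (Complex.normSq lam) ≠ 0 :=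
    (ENNReal.ofReal_pos.mpr (Complex.normSq_pos.mpr hlam)).ne'
  -- Fubini
  set e : ℝ → ℝ≥0∞ := fun x => ENNReal.ofReal (Real.exp (2 * lam.re * x)) with he
  set K : ℝ → ℝ≥0∞ := fun x => ∫⁻ y in {y : ℝ | (x : ℂ) + (y : ℂ) * Complex.I ∈ Ω},
    ENNReal.ofReal (Real.exp (-2 * lam.im * y)) with hK
  have hIK : I = ∫⁻ x : ℝ, e x * K x := aux_fubini_slice Ω hΩm lam.re lam.im
  set J : ℝ≥0∞ := ∫⁻ x : ℝ, e x * sliceLen Ω x with hJ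
  -- bounds relating K and sliceLen
  set m : ℝ := min (Real.exp (-2 * lam.im * a)) (Real.exp (-2 * lam.im * b)) with hm
  set M : ℝ := max (Real.exp (-2 * lam.im * a)) (Real.exp (-2 * lam.im * b)) with hM
  have hm0 : 0 < m := lt_min (Real.exp_pos _) (Real.exp_pos _)
  have hbound : ∀ y ∈ Ioo a b, m ≤ Real.exp (-2 * lam.im * y) ∧
      Real.exp (-2 * lam.im * y) ≤ M := by
    intro y hy
    rcases le_total 0 lam.im with hb' | hb'
    · constructor
      · exact (min_le_right _ _).trans (Real.exp_le_exp.mpr (by nlinarith [hy.2]))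
      · exact (Real.exp_le_exp.mpr (by nlinarith [hy.1])).trans (le_max_left _ _)
    · constructor
      · exact (min_le_left _ _).trans (Real.exp_le_exp.mpr (by nlinarith [hy.1]))
      · exact (Real.exp_le_exp.mpr (by nlinarith [hy.2])).trans (le_max_right _ _)
  have hKbound : ∀ x : ℝ, ENNReal.ofReal m * sliceLen Ω x ≤ K x ∧
      K x ≤ ENNReal.ofReal M * sliceLen Ω x := by
    intro x
    constructor
    · rw [show ENNReal.ofReal m * sliceLen Ω x
        = ∫⁻ _ in {y : ℝ | (x : ℂ) + (y : ℂ) * Complex.I ∈ Ω}, ENNReal.ofReal m from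
          (setLIntegral_const _ _).symm]
      exact setLIntegral_mono' (hslice_meas x)
        (fun y hy => ENNReal.ofReal_le_ofReal (hbound y (hslice_sub x hy)).1)
    · rw [show ENNReal.ofReal M * sliceLen Ω x
        = ∫⁻ _ in {y : ℝ | (x : ℂ) + (y : ℂ) * Complex.I ∈ Ω}, ENNReal.ofReal M from
          (setLIntegral_const _ _).symm]
      exact setLIntegral_mono' (hslice_meas x)
        (fun y hy => ENNReal.ofReal_le_ofReal (hbound y (hslice_sub x hy)).2)
  -- I < ⊤ ↔ J < ⊤
  have hIlow : ENNReal.ofReal m * J ≤ I := by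
    rw [hIK, hJ, ← lintegral_const_mul' _ _ (ENNReal.ofReal_ne_top)]
    apply lintegral_mono
    intro x
    calc ENNReal.ofReal m * (e x * sliceLen Ω x)
        = e x * (ENNReal.ofReal m * sliceLen Ω x) := by ring
      _ ≤ e x * K x := mul_le_mul_right (hKbound x).1 _
  have hIhigh : I ≤ ENNReal.ofReal M * J := by
    rw [hIK, hJ, ← lintegral_const_mul' _ _ (ENNReal.ofReal_ne_top)]
    apply lintegral_mono
    intro x
    calc e x * K x ≤ e x * (ENNReal.ofReal M * sliceLen Ω x) :=
          mul_le_mul_right (hKbound x).2 _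
      _ = ENNReal.ofReal M * (e x * sliceLen Ω x) := by ring
  have hIJiff : I < ⊤ ↔ J < ⊤ := by
    constructor
    · intro hIfin
      exact (aux_mul_lt_top_iff (ENNReal.ofReal_pos.mpr hm0).ne'
        ENNReal.ofReal_ne_top).mp (lt_of_le_of_lt hIlow hIfin)
    · intro hJfin
      exact lt_of_le_of_lt hIhigh (ENNReal.mul_lt_top ENNReal.ofReal_ne_top.lt_top hJfin)
  -- Main analysis : J < ⊤ ↔ (-δ < lam.re ∧ lam.re < 0)
  have hmain : J < ⊤ ↔ (-δ < lam.re ∧ lam.re < 0) := by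
    constructor
    · -- J < ⊤ → -δ < lam.re ∧ lam.re < 0
      intro hJfin
      constructor
      · by_contra hcon
        push_neg at hcon  -- lam.re ≤ -δ
        have hle : ∫⁻ x in Iio (0:ℝ), ENNReal.ofReal (Real.exp (-2 * δ * x)) * sliceLen Ω x
            ≤ ∫⁻ x in Iio (0:ℝ), e x * sliceLen Ω x := by
          apply setLIntegral_mono' measurableSet_Iio
          intro x hx
          have hx' : x < 0 := mem_Iio.mp hx
          exact mul_le_mul_left
            (ENNReal.ofReal_le_ofReal (Real.exp_le_exp.mpr (by nlinarith))) _
        rw [hint] at hle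
        have : J = ⊤ := top_le_iff.mp (hle.trans (setLIntegral_le_lintegral _ _))
        exact hJfin.ne this
      · by_contra hcon
        push_neg at hcon  -- 0 ≤ lam.re
        have hmono' : ∀ x : ℝ, 0 ≤ x → sliceLen Ω 0 ≤ sliceLen Ω x := by
          intro x hx
          apply measure_mono
          intro y hy
          have hmem := hconv x hx _ hy
          have heq : (x : ℂ) + (y : ℂ) * Complex.I
              = (((0:ℝ) : ℂ) + (y : ℂ) * Complex.I) + (x : ℂ) := by
            push_cast; ring
          rw [mem_setOf_eq, heq]
          exact hmem
        have hge : ∀ x ∈ Ici (0:ℝ), sliceLen Ω 0 ≤ e x * sliceLen Ω x := by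
          intro x hx
          have h1 : (1 : ℝ≥0∞) ≤ e x := by
            rw [he]
            simp only []
            rw [show (1:ℝ≥0∞) = ENNReal.ofReal 1 by simp]
            apply ENNReal.ofReal_le_ofReal
            rw [show (1:ℝ) = Real.exp 0 from Real.exp_zero.symm]
            exact Real.exp_le_exp.mpr (by nlinarith [mem_Ici.mp hx])
          calc sliceLen Ω 0 ≤ sliceLen Ω x := hmono' x (mem_Ici.mp hx)
            _ = 1 * sliceLen Ω x := (one_mul _).symm
            _ ≤ e x * sliceLen Ω x := mul_le_mul_left h1 _
        have htop : (⊤ : ℝ≥0∞) ≤ J := by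
          calc (⊤ : ℝ≥0∞) = sliceLen Ω 0 * volume (Ici (0:ℝ)) := by
                rw [Real.volume_Ici, ENNReal.mul_top (hpos 0 le_rfl).ne']
            _ = ∫⁻ _ in Ici (0:ℝ), sliceLen Ω 0 := (setLIntegral_const _ _).symm
            _ ≤ ∫⁻ x in Ici (0:ℝ), e x * sliceLen Ω x :=
                setLIntegral_mono' measurableSet_Ici hge
            _ ≤ J := setLIntegral_le_lintegral _ _
        exact hJfin.ne (top_le_iff.mp htop)
    · -- -δ < lam.re ∧ lam.re < 0 → J < ⊤
      rintro ⟨h1, h2⟩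
      have hsplit : J = (∫⁻ x in Iio (0:ℝ), e x * sliceLen Ω x)
          + ∫⁻ x in Ici (0:ℝ), e x * sliceLen Ω x := by
        rw [hJ, ← lintegral_add_compl (fun x => e x * sliceLen Ω x) measurableSet_Iio,
          compl_Iio]
      rw [hsplit]
      refine ENNReal.add_lt_top.mpr ⟨?_, ?_⟩
      · -- negative part
        set ε : ℝ := (δ + lam.re) / 2 with hε
        have hεpos : 0 < ε := by rw [hε]; linarith
        have hev : ∀ᶠ x in Filter.atBot,
            δ - ε < Real.log (sliceLen Ω x).toReal / (2 * x) :=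
          hlim.eventually (lt_mem_nhds (by linarith))
        obtain ⟨X₀, hX₀⟩ := Filter.eventually_atBot.mp hev
        set X : ℝ := min X₀ (-1) with hX
        have hXneg : X < 0 := lt_of_le_of_lt (min_le_right _ _) (by norm_num)
        have hbound2 : ∀ x ∈ Iio X, e x * sliceLen Ω x
            ≤ ENNReal.ofReal (Real.exp ((δ + lam.re) * x)) := by
          intro x hx
          have hx' : x < X := mem_Iio.mp hx
          have hxX0 : x ≤ X₀ := hx'.le.trans (min_le_left _ _)
          have hxneg : x < 0 := hx'.trans hXneg
          have hl := hX₀ x hxX0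
          have h2x : 2 * x < 0 := by linarith
          have hlog : Real.log (sliceLen Ω x).toReal < (δ - ε) * (2 * x) :=
            (lt_div_iff_of_neg h2x).mp hl
          have hpos' : 0 < (sliceLen Ω x).toReal :=
            ENNReal.toReal_pos (hpos x hxneg.le).ne' (hl_ne_top x)
          have hlt : (sliceLen Ω x).toReal < Real.exp ((δ - ε) * (2 * x)) := by
            calc (sliceLen Ω x).toReal
                = Real.exp (Real.log (sliceLen Ω x).toReal) := (Real.exp_log hpos').symm
              _ < _ := Real.exp_lt_exp.mpr hlog
          have hle : sliceLen Ω x ≤ ENNReal.ofReal (Real.exp ((δ - ε) * (2 * x))) := by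
            rw [← ENNReal.ofReal_toReal (hl_ne_top x)]
            exact ENNReal.ofReal_le_ofReal hlt.le
          calc e x * sliceLen Ω x
              ≤ e x * ENNReal.ofReal (Real.exp ((δ - ε) * (2 * x))) :=
                mul_le_mul_right hle _
            _ = ENNReal.ofReal (Real.exp ((δ + lam.re) * x)) := by
                rw [he]
                simp only []
                rw [← ENNReal.ofReal_mul (Real.exp_pos _).le, ← Real.exp_add]
                congr 1
                rw [hε]; ring
        have hIio_sub : Iio (0:ℝ) ⊆ Iio X ∪ Ico X 0 := by
          intro x hx
          by_cases hxX : x < X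
          · exact Or.inl hxX
          · exact Or.inr ⟨not_lt.mp hxX, mem_Iio.mp hx⟩
        calc ∫⁻ x in Iio (0:ℝ), e x * sliceLen Ω x
            ≤ ∫⁻ x in Iio X ∪ Ico X 0, e x * sliceLen Ω x :=
              lintegral_mono_set hIio_sub
          _ ≤ (∫⁻ x in Iio X, e x * sliceLen Ω x)
              + ∫⁻ x in Ico X 0, e x * sliceLen Ω x := lintegral_union_le _ _ _
          _ < ⊤ := by
              refine ENNReal.add_lt_top.mpr ⟨?_, ?_⟩
              · calc ∫⁻ x in Iio X, e x * sliceLen Ω x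
                    ≤ ∫⁻ x in Iio X, ENNReal.ofReal (Real.exp ((δ + lam.re) * x)) :=
                      setLIntegral_mono' measurableSet_Iio hbound2
                  _ < ⊤ := aux_lint_exp_Iio (by linarith) X
              · have hbd : ∀ x ∈ Ico X (0:ℝ), e x * sliceLen Ω x
                    ≤ ENNReal.ofReal (Real.exp (2 * lam.re * X)) * sliceLen Ω x := by
                  intro x hx
                  apply mul_le_mul_left
                  rw [he]
                  simp only []
                  apply ENNReal.ofReal_le_ofReal
                  apply Real.exp_le_exp.mpr
                  nlinarith [hx.1]
                calc ∫⁻ x in Ico X (0:ℝ), e x * sliceLen Ω x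
                    ≤ ∫⁻ x in Ico X (0:ℝ),
                        ENNReal.ofReal (Real.exp (2 * lam.re * X)) * sliceLen Ω x :=
                      setLIntegral_mono' measurableSet_Ico hbd
                  _ = ENNReal.ofReal (Real.exp (2 * lam.re * X))
                      * ∫⁻ x in Ico X (0:ℝ), sliceLen Ω x :=
                      lintegral_const_mul' _ _ ENNReal.ofReal_ne_top
                  _ ≤ ENNReal.ofReal (Real.exp (2 * lam.re * X))
                      * ∫⁻ x in Iio (0:ℝ), sliceLen Ω x :=
                      mul_le_mul_right (lintegral_mono_set (fun x hx => hx.2)) _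
                  _ < ⊤ := ENNReal.mul_lt_top ENNReal.ofReal_ne_top.lt_top hW
      · -- positive part
        calc ∫⁻ x in Ici (0:ℝ), e x * sliceLen Ω x
            ≤ ∫⁻ x in Ici (0:ℝ), ENNReal.ofReal (b - a) * e x := by
              apply setLIntegral_mono' measurableSet_Ici
              intro x _
              calc e x * sliceLen Ω x = sliceLen Ω x * e x := mul_comm _ _
                _ ≤ ENNReal.ofReal (b - a) * e x := mul_le_mul_left (hl_le x) _
          _ = ENNReal.ofReal (b - a) * ∫⁻ x in Ici (0:ℝ), e x :=
              lintegral_const_mul' _ _ ENNReal.ofReal_ne_top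
          _ < ⊤ := ENNReal.mul_lt_top ENNReal.ofReal_ne_top.lt_top
              (aux_lint_exp_Ici (c := 2 * lam.re) (by linarith) 0)
  rw [hA, hgI, aux_mul_lt_top_iff hc0 ENNReal.ofReal_ne_top, hIJiff]
  exact hmain
end
end
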